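/- Convolution formula for Menon's sum: for any arithmetic function f of r variables and polynomials P₁,…,P_r ∈ ℤ[x], ∑_{a=1}^{n} f(gcd(P₁(a),n),…,gcd(P_r(a),n)) = n · ∑_{d₁∣n,…,d_r∣n} ((μ_r ∗_r f)(d₁,…,d_r)/lcm(d₁,…,d_r)) · N(d₁,…,d_r), where N(d₁,…,d_r) is the number of x mod lcm(d₁,…,d_r) with P_i(x) ≡ 0 (mod d_i) for all i. -/

import Mathlib

open Finset ArithmeticFunction

private lemma menon_div_ne_zero {k m : ℕ} (hk : k ∣ m) (hm : m ≠ 0) : m / k ≠ 0 :=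
  fun h0 => hm (by rw [← Nat.div_mul_cancel hk, h0, zero_mul])

private lemma menon_sum_moebius_divisors (m : ℕ) :
    ∑ e ∈ m.divisors, (moebius e : ℤ) = if m = 1 then 1 else 0 := by
  have h := congrArg (fun g : ArithmeticFunction ℤ => g m) moebius_mul_coe_zeta
  simp only [coe_mul_zeta_apply, one_apply] at h
  exact h

private lemma menon_mob_inv (r : ℕ) (f : (Fin r → ℕ) → ℂ) (g : Fin r → ℕ)
    (hg : ∀ i, g i ≠ 0) :
    ∑ d ∈ Fintype.piFinset (fun i => (g i).divisors),
      ∑ e ∈ Fintype.piFinset (fun i => (d i).divisors),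
        (∏ i, (moebius (e i) : ℂ)) * f (fun i => d i / e i) = f g := by
  rw [Finset.sum_sigma']
  have key : ∑ p ∈ (Fintype.piFinset (fun i => (g i).divisors)).sigma
        (fun d => Fintype.piFinset (fun i => (d i).divisors)),
        (∏ i, (moebius (p.2 i) : ℂ)) * f (fun i => p.1 i / p.2 i)
      = ∑ p ∈ (Fintype.piFinset (fun i => (g i).divisors)).sigma
        (fun c => Fintype.piFinset (fun i => (g i / c i).divisors)),
        (∏ i, (moebius (p.2 i) : ℂ)) * f p.1 := by
    refine Finset.sum_nbij' (fun p => ⟨fun i => p.1 i / p.2 i, p.2⟩)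
      (fun q => ⟨fun i => q.1 i * q.2 i, q.2⟩) ?_ ?_ ?_ ?_ ?_
    · rintro ⟨d, e⟩ hp
      rw [Finset.mem_sigma] at hp ⊢
      simp only [Fintype.mem_piFinset, Nat.mem_divisors] at *
      obtain ⟨hd, he⟩ := hp
      refine ⟨fun i => ⟨(Nat.div_dvd_of_dvd (he i).1).trans (hd i).1, (hd i).2⟩, fun i => ?_⟩
      refine ⟨?_, menon_div_ne_zero ((Nat.div_dvd_of_dvd (he i).1).trans (hd i).1) (hd i).2⟩
      rw [Nat.dvd_div_iff_mul_dvd ((Nat.div_dvd_of_dvd (he i).1).trans (hd i).1)]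
      rw [Nat.div_mul_cancel (he i).1]
      exact (hd i).1
    · rintro ⟨c, e⟩ hq
      rw [Finset.mem_sigma] at hq ⊢
      simp only [Fintype.mem_piFinset, Nat.mem_divisors] at *
      obtain ⟨hc, he⟩ := hq
      have hce : ∀ i, c i * e i ∣ g i := by
        intro i
        have := (Nat.dvd_div_iff_mul_dvd (hc i).1).mp (he i).1
        exact this
      refine ⟨fun i => ⟨hce i, (hc i).2⟩, fun i => ?_⟩
      have he0 : e i ≠ 0 := fun h0 =>
        (he i).2 (Nat.eq_zero_of_zero_dvd (h0 ▸ (he i).1))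
      have hc0 : c i ≠ 0 := fun h0 =>
        (hc i).2 (Nat.eq_zero_of_zero_dvd (h0 ▸ (hc i).1))
      exact ⟨Dvd.intro_left _ rfl, by positivity⟩
    · rintro ⟨d, e⟩ hp
      rw [Finset.mem_sigma] at hp
      simp only [Fintype.mem_piFinset, Nat.mem_divisors] at hp
      have : (fun i => d i / e i * e i) = d :=
        funext fun i => Nat.div_mul_cancel (hp.2 i).1
      simp only [this]
    · rintro ⟨c, e⟩ hq
      rw [Finset.mem_sigma] at hq
      simp only [Fintype.mem_piFinset, Nat.mem_divisors] at hq
      have he0 : ∀ i, 0 < e i := by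
        intro i
        rcases Nat.eq_zero_or_pos (e i) with h0 | h
        · exact absurd (Nat.eq_zero_of_zero_dvd (h0 ▸ (hq.2 i).1)) (hq.2 i).2
        · exact h
      have : (fun i => c i * e i / e i) = c :=
        funext fun i => Nat.mul_div_cancel (c i) (he0 i)
      simp only [this]
    · rintro ⟨d, e⟩ _
      rfl
  rw [key, Finset.sum_sigma]
  have inner : ∀ c ∈ Fintype.piFinset (fun i => (g i).divisors),
      ∑ e ∈ Fintype.piFinset (fun i => (g i / c i).divisors),
        (∏ i, (moebius (e i) : ℂ)) * f c
      = (∏ i, if g i / c i = 1 then (1 : ℂ) else 0) * f c := by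
    intro c _
    have hps : (∏ i, ∑ x ∈ (g i / c i).divisors, (moebius x : ℂ))
        = ∑ e ∈ Fintype.piFinset (fun i => (g i / c i).divisors),
            ∏ i, (moebius (e i) : ℂ) :=
      Finset.prod_univ_sum _ _
    rw [← Finset.sum_mul, ← hps]
    congr 1
    refine Finset.prod_congr rfl fun i _ => ?_
    have h1 := menon_sum_moebius_divisors (g i / c i)
    have h2 : ((∑ e ∈ (g i / c i).divisors, (moebius e : ℤ) : ℤ) : ℂ)
        = ((if g i / c i = 1 then (1 : ℤ) else 0 : ℤ) : ℂ) := by rw [h1]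
    push_cast at h2
    rw [h2]
  rw [Finset.sum_congr rfl inner]
  rw [Finset.sum_eq_single g]
  · have h3 : ∀ i ∈ (Finset.univ : Finset (Fin r)),
        (if g i / g i = 1 then (1:ℂ) else 0) = 1 := by
      intro i _
      rw [Nat.div_self (Nat.pos_of_ne_zero (hg i)), if_pos rfl]
    rw [Finset.prod_congr rfl h3, Finset.prod_const_one, one_mul]
  · intro c hc hne
    have : ∃ i, c i ≠ g i := by
      by_contra hall
      push_neg at hall
      exact hne (funext hall)
    obtain ⟨i, hi⟩ := this
    rw [Fintype.mem_piFinset] at hc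
    have hci := Nat.mem_divisors.mp (hc i)
    have : g i / c i ≠ 1 := by
      intro h1
      have := Nat.div_mul_cancel hci.1
      rw [h1, one_mul] at this
      exact hi this
    have hz : (∏ i, if g i / c i = 1 then (1:ℂ) else 0) = 0 :=
      Finset.prod_eq_zero (Finset.mem_univ i) (by rw [if_neg this])
    rw [hz, zero_mul]
  · intro hg'
    exact absurd (Fintype.mem_piFinset.mpr fun i => Nat.mem_divisors.mpr ⟨dvd_rfl, hg i⟩) hg'

private lemma menon_count (L m : ℕ) (C : ℕ → Prop) [DecidablePred C]
    (hper : ∀ x, C (x + L) ↔ C x) :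
    ((Finset.Icc 1 (L * m)).filter C).card = m * ((Finset.range L).filter C).card := by
  have S1 : ∀ a0 : ℕ, ∑ s ∈ range L, (if C (a0 + s) then 1 else 0)
      = ∑ s ∈ range L, (if C s then 1 else 0 : ℕ) := by
    intro a0
    induction a0 with
    | zero => simp
    | succ a ih =>
      have key : (∑ s ∈ range L, if C (a + 1 + s) then (1:ℕ) else 0)
          = ∑ s ∈ range L, if C (a + s) then (1:ℕ) else 0 := by
        have e1 : (∑ s ∈ range L, if C (a + 1 + s) then (1:ℕ) else 0) + (if C a then 1 else 0)
            = (∑ s ∈ range L, if C (a + s) then (1:ℕ) else 0) + (if C a then 1 else 0) := by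
          have h2 := Finset.sum_range_succ' (fun s => if C (a + s) then (1:ℕ) else 0) L
          have h1 := Finset.sum_range_succ (fun s => if C (a + s) then (1:ℕ) else 0) L
          have hshift : (∑ s ∈ range L, if C (a + (s + 1)) then (1:ℕ) else 0)
              = ∑ s ∈ range L, if C (a + 1 + s) then (1:ℕ) else 0 := by
            refine Finset.sum_congr rfl fun s _ => ?_
            have : a + (s + 1) = a + 1 + s := by omega
            rw [this]
          have hCL : (if C (a + L) then (1:ℕ) else 0) = (if C a then 1 else 0) :=
            if_congr (hper a) rfl rfl
          rw [hshift, add_zero] at h2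
          rw [hCL] at h1
          rw [← h2, h1]
        exact Nat.add_right_cancel e1
      rw [key, ih]
  rw [Finset.card_filter, ← Finset.Ico_add_one_right_eq_Icc, Finset.sum_Ico_eq_sum_range]
  have hN : ((Finset.range L).filter C).card = ∑ s ∈ range L, (if C s then 1 else 0 : ℕ) :=
    Finset.card_filter _ _
  rw [hN]
  have hrange : L * m + 1 - 1 = L * m := by omega
  rw [hrange]
  have S2 : ∀ m' : ℕ, (∑ k ∈ range (L * m'), if C (1 + k) then (1:ℕ) else 0)
      = m' * ∑ s ∈ range L, (if C s then 1 else 0 : ℕ) := by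
    intro m'
    induction m' with
    | zero => simp
    | succ m' ih =>
      rw [Nat.mul_succ, Finset.sum_range_add, ih, Nat.succ_mul]
      congr 1
      have hre : (∑ s ∈ range L, if C (1 + (L * m' + s)) then (1:ℕ) else 0)
          = ∑ s ∈ range L, if C (1 + L * m' + s) then (1:ℕ) else 0 := by
        refine Finset.sum_congr rfl fun s _ => ?_
        have : 1 + (L * m' + s) = 1 + L * m' + s := by omega
        rw [this]
      rw [hre, S1 (1 + L * m')]
  exact S2 m

theorem menon_sum_convolution_formula (r n : ℕ) (hn : 0 < n)
    (f : (Fin r → ℕ) → ℂ) (P : Fin r → Polynomial ℤ) :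
    ∑ a ∈ Finset.Icc 1 n, f (fun i => Int.gcd ((P i).eval (a : ℤ)) (n : ℤ))
      = n * ∑ d ∈ Fintype.piFinset (fun _ : Fin r => n.divisors),
          ((∑ e ∈ Fintype.piFinset (fun i => (d i).divisors),
              (∏ i, (ArithmeticFunction.moebius (e i) : ℂ)) * f (fun i => d i / e i)) /
            ((((Finset.univ : Finset (Fin r)).lcm d : ℕ) : ℂ))) *
          (((Finset.range ((Finset.univ : Finset (Fin r)).lcm d)).filter
              (fun x : ℕ => ∀ i, ((d i : ℕ) : ℤ) ∣ (P i).eval (x : ℤ))).card : ℂ) := by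
  classical
  have hn0 : n ≠ 0 := hn.ne'
  set h : (Fin r → ℕ) → ℂ := fun d => ∑ e ∈ Fintype.piFinset (fun i => (d i).divisors),
      (∏ i, (moebius (e i) : ℂ)) * f (fun i => d i / e i) with hh
  -- Step 1 + 2 : rewrite each summand of the LHS
  have step1 : ∀ a : ℕ,
      f (fun i => Int.gcd ((P i).eval (a : ℤ)) (n : ℤ))
      = ∑ d ∈ Fintype.piFinset (fun _ : Fin r => n.divisors),
          if (∀ i, ((d i : ℕ) : ℤ) ∣ (P i).eval (a : ℤ)) then h d else 0 := by
    intro a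
    have hgne : ∀ i, Int.gcd ((P i).eval (a : ℤ)) (n : ℤ) ≠ 0 := by
      intro i hz
      rw [Int.gcd_eq_zero_iff] at hz
      exact hn0 (by exact_mod_cast hz.2)
    rw [← menon_mob_inv r f _ hgne]
    rw [← Finset.sum_filter]
    apply Finset.sum_congr
    · ext d
      simp only [Fintype.mem_piFinset, Nat.mem_divisors, Finset.mem_filter]
      constructor
      · intro hd
        refine ⟨fun i => ⟨?_, hn0⟩, fun i => ?_⟩
        · exact Int.natCast_dvd_natCast.mp
            ((Int.natCast_dvd_natCast.mpr (hd i).1).trans (Int.gcd_dvd_right _ _))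
        · exact (Int.natCast_dvd_natCast.mpr (hd i).1).trans (Int.gcd_dvd_left _ _)
      · rintro ⟨hdn, hdP⟩ i
        exact ⟨Int.natCast_dvd_natCast.mp
            (Int.dvd_coe_gcd (hdP i) (Int.natCast_dvd_natCast.mpr (hdn i).1)), hgne i⟩
    · intro d _
      rfl
  calc
    ∑ a ∈ Finset.Icc 1 n, f (fun i => Int.gcd ((P i).eval (a : ℤ)) (n : ℤ))
        = ∑ a ∈ Finset.Icc 1 n, ∑ d ∈ Fintype.piFinset (fun _ : Fin r => n.divisors),
            if (∀ i, ((d i : ℕ) : ℤ) ∣ (P i).eval (a : ℤ)) then h d else 0 :=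
      Finset.sum_congr rfl fun a _ => step1 a
    _ = ∑ d ∈ Fintype.piFinset (fun _ : Fin r => n.divisors),
          ∑ a ∈ Finset.Icc 1 n,
            if (∀ i, ((d i : ℕ) : ℤ) ∣ (P i).eval (a : ℤ)) then h d else 0 :=
      Finset.sum_comm
    _ = ∑ d ∈ Fintype.piFinset (fun _ : Fin r => n.divisors),
          ((((Finset.Icc 1 n).filter
              (fun a : ℕ => ∀ i, ((d i : ℕ) : ℤ) ∣ (P i).eval (a : ℤ))).card : ℕ) : ℂ) * h d := by
      refine Finset.sum_congr rfl fun d _ => ?_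
      rw [← Finset.sum_filter, Finset.sum_const, nsmul_eq_mul]
    _ = n * ∑ d ∈ Fintype.piFinset (fun _ : Fin r => n.divisors),
          (h d / (((Finset.univ : Finset (Fin r)).lcm d : ℕ) : ℂ)) *
          (((Finset.range ((Finset.univ : Finset (Fin r)).lcm d)).filter
              (fun x : ℕ => ∀ i, ((d i : ℕ) : ℤ) ∣ (P i).eval (x : ℤ))).card : ℂ) := by
      rw [Finset.mul_sum]
      refine Finset.sum_congr rfl fun d hd => ?_
      rw [Fintype.mem_piFinset] at hd
      have hdn : ∀ i, d i ∣ n := fun i => (Nat.mem_divisors.mp (hd i)).1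
      set L : ℕ := (Finset.univ : Finset (Fin r)).lcm d with hL
      have hLn : L ∣ n := Finset.lcm_dvd fun i _ => hdn i
      have hL0 : L ≠ 0 := fun h0 => hn0 (Nat.eq_zero_of_zero_dvd (h0 ▸ hLn))
      have hdL : ∀ i, d i ∣ L := fun i => Finset.dvd_lcm (Finset.mem_univ i)
      set C : ℕ → Prop := fun x : ℕ => ∀ i, ((d i : ℕ) : ℤ) ∣ (P i).eval (x : ℤ) with hC
      have hper : ∀ x, C (x + L) ↔ C x := by
        intro x
        have key : ∀ i : Fin r,
            ((d i : ℕ) : ℤ) ∣ (P i).eval (((x + L : ℕ) : ℤ)) - (P i).eval (x : ℤ) := by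
          intro i
          have h1 : ((x + L : ℕ) : ℤ) - (x : ℤ) ∣
              (P i).eval (((x + L : ℕ) : ℤ)) - (P i).eval (x : ℤ) :=
            Polynomial.sub_dvd_eval_sub _ _ _
          have h2 : ((x + L : ℕ) : ℤ) - (x : ℤ) = (L : ℤ) := by push_cast; ring
          rw [h2] at h1
          exact dvd_trans (Int.natCast_dvd_natCast.mpr (hdL i)) h1
        constructor
        · intro hx i
          have := dvd_sub (hx i) (key i)
          simpa using this
        · intro hx i
          have := dvd_add (hx i) (key i)
          simpa using this
      have hcount : ((Finset.Icc 1 n).filter C).card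
          = (n / L) * ((Finset.range L).filter C).card := by
        have hn_eq : n = L * (n / L) := (Nat.mul_div_cancel' hLn).symm
        rw [show Finset.Icc 1 n = Finset.Icc 1 (L * (n / L)) by rw [← hn_eq]]
        exact menon_count L (n / L) C hper
      rw [hcount]
      have hcast : (n : ℂ) = (L : ℂ) * ((n / L : ℕ) : ℂ) := by
        exact_mod_cast congrArg (Nat.cast : ℕ → ℂ) (Nat.mul_div_cancel' hLn).symm
      have hLC : (L : ℂ) ≠ 0 := Nat.cast_ne_zero.mpr hL0
      rw [hcast]
      push_cast
      field_simp
      ring
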